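/- Let G be a graph without two edge-disjoint cycles, v a non-cut vertex of G with four distinct neighbors u₁,u₂,u₃,u₄. Then there is no pair of paths P₁ from u₁ to u₄ and P₂ from u₂ to u₃, both avoiding v. Equivalently: if v is a non-cut vertex of a graph G and d(v) ≥ 4, then G contains two edge-disjoint cycles. -/

import Mathlib

open Classical in
/-- Adjacency matrix of a simple graph over ℝ. -/
noncomputable def adjMat {V : Type*} [Fintype V] (G : SimpleGraph V) : Matrix V V ℝ :=
  Matrix.of fun i j => if G.Adj i j then (1 : ℝ) else 0

/-- Spectral radius: largest adjacency eigenvalue. -/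
noncomputable def specRad {V : Type*} [Fintype V] (G : SimpleGraph V) : ℝ :=
  sSup {t : ℝ | ∃ x : V → ℝ, x ≠ 0 ∧ (adjMat G).mulVec x = t • x}

/-- `G` contains two edge-disjoint cycles. -/
def HasTwoEdgeDisjointCycles {V : Type*} (G : SimpleGraph V) : Prop :=
  ∃ (u v : V) (c₁ : G.Walk u u) (c₂ : G.Walk v v),
    c₁.IsCycle ∧ c₂.IsCycle ∧ ∀ e ∈ c₁.edges, e ∉ c₂.edges

/-- `G` contains two distinct cycles (as subgraphs) of the same length. -/
def HasTwoCyclesSameLength {V : Type*} [DecidableEq V] (G : SimpleGraph V) : Prop :=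
  ∃ (u v : V) (c₁ : G.Walk u u) (c₂ : G.Walk v v),
    c₁.IsCycle ∧ c₂.IsCycle ∧ c₁.length = c₂.length ∧
      c₁.edges.toFinset ≠ c₂.edges.toFinset

/-- The edge set of a triangle given by a triple of vertices. -/
def triEdges {V : Type*} (t : V × V × V) : Set (Sym2 V) :=
  {s(t.1, t.2.1), s(t.2.1, t.2.2), s(t.1, t.2.2)}

/-- `G` contains `k` pairwise edge-disjoint triangles. -/
def HasEdgeDisjointTriangles {V : Type*} (G : SimpleGraph V) (k : ℕ) : Prop :=
  ∃ T : Fin k → V × V × V,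
    (∀ i, G.Adj (T i).1 (T i).2.1 ∧ G.Adj (T i).2.1 (T i).2.2 ∧ G.Adj (T i).1 (T i).2.2) ∧
    ∀ i j, i ≠ j → Disjoint (triEdges (T i)) (triEdges (T j))

/-- The star `K_{1,n-1}` (center `0`) plus an edge between the leaves `1` and `2`. -/
def starPlus (n : ℕ) : SimpleGraph (Fin n) :=
  SimpleGraph.fromRel (fun x y => x.val = 0 ∨ (x.val < 3 ∧ y.val < 3))

/-- `K₄ • K_{1,n-4}`: `K₄` on `{0,1,2,3}` with `0` joined to everything. -/
def K4Star (n : ℕ) : SimpleGraph (Fin n) :=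
  SimpleGraph.fromRel (fun x y => x.val = 0 ∨ (x.val < 4 ∧ y.val < 4))

/-- `K_{3,3} • K_{1,n-6}`: `K_{3,3}` with parts `{0,1,2}`, `{3,4,5}`, and the vertex `0`
identified with the center of a star with leaves `6,…,n-1`. -/
def K33Star (n : ℕ) : SimpleGraph (Fin n) :=
  SimpleGraph.fromRel (fun x y =>
    (x.val < 3 ∧ 3 ≤ y.val ∧ y.val < 6) ∨ (x.val = 0 ∧ 6 ≤ y.val))

/-- `K_{⌈n/2⌉,⌊n/2⌋}` with a star `K_{1,k-1}` (center `0`, leaves `1,…,k-1`) embedded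
in the part `{0,…,⌊n/2⌋-1}` of size `⌊n/2⌋`. -/
def bipStar (n k : ℕ) : SimpleGraph (Fin n) :=
  SimpleGraph.fromRel (fun x y =>
    (x.val < n / 2 ∧ n / 2 ≤ y.val) ∨ (x.val = 0 ∧ 0 < y.val ∧ y.val < k))

/-- `K_{⌈n/2⌉,⌊n/2⌋}` with a triangle `C₃` on `{0,1,2}` embedded in the part of size `⌊n/2⌋`. -/
def bipTri (n : ℕ) : SimpleGraph (Fin n) :=
  SimpleGraph.fromRel (fun x y =>
    (x.val < n / 2 ∧ n / 2 ≤ y.val) ∨ (x.val < 3 ∧ y.val < 3))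

/-- `v` is a cut vertex of `G`. -/
def IsCutVertex {V : Type*} (G : SimpleGraph V) (v : V) : Prop :=
  ∃ a b : ({v}ᶜ : Set V), G.Reachable ↑a ↑b ∧ ¬ (G.induce ({v}ᶜ : Set V)).Reachable a b

namespace TwoCyclesAux

open SimpleGraph Walk

variable {V : Type*} {G : SimpleGraph V}

lemma split_first (pred : V → Prop) {c d : V} (Q : G.Walk c d)
    (h : ∃ y ∈ Q.support, pred y) :
    ∃ (x : V) (Q1 : G.Walk c x) (Q2 : G.Walk x d),
      Q1.append Q2 = Q ∧ pred x ∧ ∀ w ∈ Q1.support, pred w → w = x := by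
  classical
  induction Q with
  | nil =>
      obtain ⟨y, hy, hpy⟩ := h
      simp only [Walk.support_nil, List.mem_singleton] at hy
      subst hy
      exact ⟨_, Walk.nil, Walk.nil, rfl, hpy, by simp⟩
  | @cons u w d h' q ih =>
      by_cases hc : pred u
      · exact ⟨u, Walk.nil, Walk.cons h' q, by simp, hc, by simp⟩
      · have h2 : ∃ y ∈ q.support, pred y := by
          obtain ⟨y, hy, hpy⟩ := h
          rw [Walk.support_cons] at hy
          rcases List.mem_cons.mp hy with rfl | hy'
          · exact absurd hpy hc
          · exact ⟨y, hy', hpy⟩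
        obtain ⟨x, Q1, Q2, hQ, hx, hcl⟩ := ih h2
        refine ⟨x, Walk.cons h' Q1, Q2, ?_, hx, ?_⟩
        · rw [Walk.cons_append, hQ]
        · intro w hw hpw
          rw [Walk.support_cons] at hw
          rcases List.mem_cons.mp hw with rfl | hw'
          · exact absurd hpw hc
          · exact hcl w hw' hpw

lemma isPath_append {a b c : V} {p : G.Walk a b} {q : G.Walk b c}
    (h : (p.append q).IsPath) : p.IsPath ∧ q.IsPath := by
  rw [Walk.isPath_def, Walk.support_append, List.nodup_append] at h
  obtain ⟨h1, h2, h3⟩ := h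
  refine ⟨Walk.IsPath.mk' h1, Walk.IsPath.mk' ?_⟩
  rw [q.support_eq_cons, List.nodup_cons]
  exact ⟨fun hb => h3 _ (p.end_mem_support) _ hb rfl, h2⟩

lemma not_mem_edges_left {w u x y : V} {W : G.Walk x y} (hv : w ∉ W.support) :
    s(w, u) ∉ W.edges := fun h => hv (W.fst_mem_support_of_mem_edges h)

lemma not_mem_edges_right {w u x y : V} {W : G.Walk x y} (hv : w ∉ W.support) :
    s(u, w) ∉ W.edges := fun h => hv (W.snd_mem_support_of_mem_edges h)

lemma cyc {v a b : V} (hva : G.Adj v a) (hvb : G.Adj v b) (hab : a ≠ b)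
    (P : G.Walk a b) (hP : P.IsPath) (hPv : v ∉ P.support) :
    ∃ c : G.Walk v v, c.IsCycle ∧ c.edges = s(v, a) :: (P.edges ++ [s(b, v)]) := by
  refine ⟨Walk.cons hva (P.append (Walk.cons hvb.symm Walk.nil)), ?_, ?_⟩
  · rw [Walk.cons_isCycle_iff]
    constructor
    · apply Walk.IsPath.mk'
      rw [Walk.support_append]
      simp only [Walk.support_cons, Walk.support_nil, List.tail_cons]
      rw [List.nodup_append]
      exact ⟨hP.support_nodup, List.nodup_singleton v,
        fun w hw u hu => by
          rw [List.mem_singleton] at hu; subst hu; intro hh; subst hh; exact hPv hw⟩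
    · rw [Walk.edges_append]
      simp only [Walk.edges_cons, Walk.edges_nil, List.mem_append, List.mem_singleton]
      rintro (h | h)
      · exact not_mem_edges_left hPv h
      · rw [Sym2.eq_iff] at h
        rcases h with ⟨h1, h2⟩ | ⟨h1, h2⟩
        · exact hvb.ne' h1.symm
        · exact hab h2
  · simp [Walk.edges_cons, Walk.edges_append]

lemma twoCycles {v a b c d : V}
    (hva : G.Adj v a) (hvb : G.Adj v b) (hvc : G.Adj v c) (hvd : G.Adj v d)
    (hab : a ≠ b) (hcd : c ≠ d) (hac : a ≠ c) (had : a ≠ d) (hbc : b ≠ c) (hbd : b ≠ d)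
    (A : G.Walk a b) (hA : A.IsPath) (hAv : v ∉ A.support)
    (B : G.Walk c d) (hB : B.IsPath) (hBv : v ∉ B.support)
    (hAB : ∀ e ∈ A.edges, e ∉ B.edges) :
    HasTwoEdgeDisjointCycles G := by
  obtain ⟨c₁, hc₁, he₁⟩ := cyc hva hvb hab A hA hAv
  obtain ⟨c₂, hc₂, he₂⟩ := cyc hvc hvd hcd B hB hBv
  refine ⟨v, v, c₁, c₂, hc₁, hc₂, ?_⟩
  intro e he1 he2
  rw [he₁] at he1
  rw [he₂] at he2
  rcases List.mem_cons.mp he1 with rfl | he1'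
  · rcases List.mem_cons.mp he2 with h | h
    · rw [Sym2.eq_iff] at h
      rcases h with ⟨h1, h2⟩ | ⟨h1, h2⟩
      · exact hac h2
      · exact hvc.ne' h1.symm
    · rcases List.mem_append.mp h with h' | h'
      · exact not_mem_edges_left hBv h'
      · rw [List.mem_singleton, Sym2.eq_iff] at h'
        rcases h' with ⟨h1, h2⟩ | ⟨h1, h2⟩
        · exact hvd.ne' h1.symm
        · exact had h2
  · rcases List.mem_append.mp he1' with hA1 | hA1
    · rcases List.mem_cons.mp he2 with rfl | h
      · exact not_mem_edges_left hAv hA1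
      · rcases List.mem_append.mp h with h' | h'
        · exact hAB e hA1 h'
        · rw [List.mem_singleton] at h'
          subst h'
          exact not_mem_edges_right hAv hA1
    · rw [List.mem_singleton] at hA1
      subst hA1
      rcases List.mem_cons.mp he2 with h | h
      · rw [Sym2.eq_iff] at h
        rcases h with ⟨h1, h2⟩ | ⟨h1, h2⟩
        · exact hvb.ne' h1
        · exact hbc h1
      · rcases List.mem_append.mp h with h' | h'
        · exact not_mem_edges_right hBv h'
        · rw [List.mem_singleton, Sym2.eq_iff] at h'
          rcases h' with ⟨h1, h2⟩ | ⟨h1, h2⟩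
          · exact hbd h1
          · exact hvb.ne' h1

lemma core' {v a b c d x y : V}
    (hva : G.Adj v a) (hvb : G.Adj v b) (hvc : G.Adj v c) (hvd : G.Adj v d)
    (hab : a ≠ b) (hac : a ≠ c) (had : a ≠ d) (hbc : b ≠ c) (hbd : b ≠ d) (hcd : c ≠ d)
    (P1 : G.Walk a x) (P2 : G.Walk x b) (hP : (P1.append P2).IsPath)
    (hPv : v ∉ (P1.append P2).support)
    (hy : y ∈ P2.support)
    (S : G.Walk x c) (hS : S.IsPath) (hSv : v ∉ S.support)
    (hSP : ∀ w ∈ S.support, w ∈ (P1.append P2).support → w = x)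
    (T : G.Walk y d) (hT : T.IsPath) (hTv : v ∉ T.support)
    (hTP : ∀ w ∈ T.support, w ∈ (P1.append P2).support → w = y)
    (hST : ∀ e ∈ S.edges, e ∉ T.edges) :
    HasTwoEdgeDisjointCycles G := by
  classical
  obtain ⟨hP1, hP2⟩ := isPath_append hP
  set P2a := P2.takeUntil y hy with hP2a_def
  set P2b := P2.dropUntil y hy with hP2b_def
  have hP2spec : P2a.append P2b = P2 := P2.take_spec hy
  have hP2b : P2b.IsPath := hP2.dropUntil hy
  -- membership transfers
  have hP1sub : ∀ w ∈ P1.support, w ∈ (P1.append P2).support :=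
    fun w hw => Walk.subset_support_append_left _ _ hw
  have hP2sub : ∀ w ∈ P2.support, w ∈ (P1.append P2).support :=
    fun w hw => Walk.subset_support_append_right _ _ hw
  have hP2bsub : ∀ w ∈ P2b.support, w ∈ (P1.append P2).support :=
    fun w hw => hP2sub w (P2.support_dropUntil_subset hy hw)
  -- edge facts
  have hPedges : (P1.append P2).edges = P1.edges ++ (P2a.edges ++ P2b.edges) := by
    rw [Walk.edges_append, ← hP2spec, Walk.edges_append]
  have hPnodup : (P1.append P2).edges.Nodup := hP.isTrail.edges_nodup
  rw [hPedges, List.nodup_append] at hPnodup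
  have hP1edge : ∀ e ∈ P1.edges, e ∈ (P1.append P2).edges := by
    intro e he; rw [hPedges]; exact List.mem_append_left _ he
  have hP2bedge : ∀ e ∈ P2b.edges, e ∈ (P1.append P2).edges := by
    intro e he; rw [hPedges]
    exact List.mem_append_right _ (List.mem_append_right _ he)
  -- the two paths
  have hApath : (P1.append S).IsPath := by
    apply Walk.IsPath.mk'
    rw [Walk.support_append, List.nodup_append]
    refine ⟨hP1.support_nodup, ?_, ?_⟩
    · have := hS.support_nodup
      rw [S.support_eq_cons, List.nodup_cons] at this
      exact this.2
    · intro w hw w' hw' hww; rw [← hww] at hw'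
      have hwS : w ∈ S.support := List.mem_of_mem_tail hw'
      have : w = x := hSP w hwS (hP1sub w hw)
      subst this
      have := hS.support_nodup
      rw [S.support_eq_cons, List.nodup_cons] at this
      exact this.1 hw'
  have hApv : v ∉ (P1.append S).support := by
    rw [Walk.mem_support_append_iff]
    rintro (h | h)
    · exact hPv (hP1sub v h)
    · exact hSv h
  have hBpath : (P2b.reverse.append T).IsPath := by
    apply Walk.IsPath.mk'
    rw [Walk.support_append, List.nodup_append]
    refine ⟨by rw [Walk.support_reverse]; exact List.nodup_reverse.mpr hP2b.support_nodup, ?_, ?_⟩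
    · have := hT.support_nodup
      rw [T.support_eq_cons, List.nodup_cons] at this
      exact this.2
    · intro w hw w' hw' hww; rw [← hww] at hw'
      rw [Walk.support_reverse, List.mem_reverse] at hw
      have hwT : w ∈ T.support := List.mem_of_mem_tail hw'
      have : w = y := hTP w hwT (hP2bsub w hw)
      subst this
      have := hT.support_nodup
      rw [T.support_eq_cons, List.nodup_cons] at this
      exact this.1 hw'
  have hBpv : v ∉ (P2b.reverse.append T).support := by
    rw [Walk.mem_support_append_iff]
    rintro (h | h)
    · rw [Walk.support_reverse, List.mem_reverse] at h
      exact hPv (hP2bsub v h)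
    · exact hTv h
  -- edge disjointness
  have hdisj : ∀ e ∈ (P1.append S).edges, e ∉ (P2b.reverse.append T).edges := by
    intro e he he'
    rw [Walk.edges_append, List.mem_append] at he he'
    rw [Walk.edges_reverse, List.mem_reverse] at he'
    rcases he with he | he <;> rcases he' with he' | he'
    · -- P1 vs P2b
      exact hPnodup.2.2 _ he _ (List.mem_append_right _ he') rfl
    · -- P1 vs T
      induction e using Sym2.ind with
      | _ p q =>
        have hpq : p ≠ q := (Walk.adj_of_mem_edges _ he).ne
        have hp : p = y := hTP p (Walk.fst_mem_support_of_mem_edges _ he')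
          (Walk.fst_mem_support_of_mem_edges _ (hP1edge _ he))
        have hq : q = y := hTP q (Walk.snd_mem_support_of_mem_edges _ he')
          (Walk.snd_mem_support_of_mem_edges _ (hP1edge _ he))
        exact hpq (hp.trans hq.symm)
    · -- S vs P2b
      induction e using Sym2.ind with
      | _ p q =>
        have hpq : p ≠ q := (Walk.adj_of_mem_edges _ he).ne
        have hp : p = x := hSP p (Walk.fst_mem_support_of_mem_edges _ he)
          (Walk.fst_mem_support_of_mem_edges _ (hP2bedge _ he'))
        have hq : q = x := hSP q (Walk.snd_mem_support_of_mem_edges _ he)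
          (Walk.snd_mem_support_of_mem_edges _ (hP2bedge _ he'))
        exact hpq (hp.trans hq.symm)
    · exact hST e he he'
  exact twoCycles hva hvc hvb hvd hac hbd hab had hbc.symm hcd
    (P1.append S) hApath hApv (P2b.reverse.append T) hBpath hBpv hdisj

lemma core {v a b c d x y : V}
    (hva : G.Adj v a) (hvb : G.Adj v b) (hvc : G.Adj v c) (hvd : G.Adj v d)
    (hab : a ≠ b) (hac : a ≠ c) (had : a ≠ d) (hbc : b ≠ c) (hbd : b ≠ d) (hcd : c ≠ d)
    (P : G.Walk a b) (hP : P.IsPath) (hPv : v ∉ P.support)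
    (hx : x ∈ P.support) (hy : y ∈ P.support)
    (S : G.Walk x c) (hS : S.IsPath) (hSv : v ∉ S.support)
    (hSP : ∀ w ∈ S.support, w ∈ P.support → w = x)
    (T : G.Walk y d) (hT : T.IsPath) (hTv : v ∉ T.support)
    (hTP : ∀ w ∈ T.support, w ∈ P.support → w = y)
    (hST : ∀ e ∈ S.edges, e ∉ T.edges) :
    HasTwoEdgeDisjointCycles G := by
  classical
  obtain ⟨z, P1, P2, happ, hz, hcl⟩ :=
    split_first (fun w => w = x ∨ w = y) P ⟨x, hx, Or.inl rfl⟩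
  subst happ
  rcases hz with rfl | rfl
  · -- z = x
    have hy2 : y ∈ P2.support := by
      by_cases hxy : y = z
      · subst hxy; exact P2.start_mem_support
      · rcases Walk.mem_support_append_iff _ _ |>.mp hy with h | h
        · exact absurd (hcl y h (Or.inr rfl)) hxy
        · exact h
    exact core' hva hvb hvc hvd hab hac had hbc hbd hcd
      P1 P2 hP hPv hy2 S hS hSv hSP T hT hTv hTP hST
  · -- z = y
    have hx2 : x ∈ P2.support := by
      by_cases hxy : x = z
      · subst hxy; exact P2.start_mem_support
      · rcases Walk.mem_support_append_iff _ _ |>.mp hx with h | h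
        · exact absurd (hcl x h (Or.inl rfl)) hxy
        · exact h
    exact core' hva hvb hvd hvc hab had hac hbd hbc hcd.symm
      P1 P2 hP hPv hx2 T hT hTv hTP S hS hSv hSP
      (fun e heT heS => hST e heS heT)

lemma exists_path_avoiding {v a b : V} (hv : ¬ IsCutVertex G v)
    (ha : G.Adj v a) (hb : G.Adj v b) :
    ∃ W : G.Walk a b, W.IsPath ∧ v ∉ W.support := by
  classical
  have hav : a ∈ ({v}ᶜ : Set V) := by simpa using ha.ne'
  have hbv : b ∈ ({v}ᶜ : Set V) := by simpa using hb.ne'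
  have hr : G.Reachable a b := (ha.reachable).symm.trans hb.reachable
  have h2 : (G.induce ({v}ᶜ : Set V)).Reachable ⟨a, hav⟩ ⟨b, hbv⟩ := by
    by_contra hcon
    exact hv ⟨⟨a, hav⟩, ⟨b, hbv⟩, hr, hcon⟩
  obtain ⟨W0⟩ := h2
  let Wp := W0.toPath
  refine ⟨Wp.1.map (SimpleGraph.Embedding.induce (G := G) ({v}ᶜ : Set V)).toHom, ?_, ?_⟩
  · exact Walk.map_isPath_of_injective
      (SimpleGraph.Embedding.induce (G := G) ({v}ᶜ : Set V)).injective Wp.2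
  · erw [Walk.support_map]
    intro h
    obtain ⟨w, hw, hwv⟩ := List.mem_map.mp h
    have hw2 : (w : V) ∈ ({v}ᶜ : Set V) := w.2
    rw [Set.mem_compl_iff, Set.mem_singleton_iff] at hw2
    exact hw2 hwv

theorem main {V : Type*} [Fintype V] (G : SimpleGraph V) [DecidableRel G.Adj]
    (v : V) (hv : ¬ IsCutVertex G v) (hd : 4 ≤ G.degree v) :
    HasTwoEdgeDisjointCycles G := by
  classical
  have hcard : 4 ≤ (G.neighborFinset v).card := by
    rwa [SimpleGraph.card_neighborFinset_eq_degree]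
  set N := G.neighborFinset v with hN
  have hc0 : 0 < N.card := by omega
  obtain ⟨u1, hu1⟩ := Finset.card_pos.mp hc0
  have hc1 : 0 < (N.erase u1).card := by
    rw [Finset.card_erase_of_mem hu1]; omega
  obtain ⟨u2, hu2⟩ := Finset.card_pos.mp hc1
  have hc2 : 0 < ((N.erase u1).erase u2).card := by
    rw [Finset.card_erase_of_mem hu2, Finset.card_erase_of_mem hu1]; omega
  obtain ⟨u3, hu3⟩ := Finset.card_pos.mp hc2
  have hc3 : 0 < (((N.erase u1).erase u2).erase u3).card := by
    rw [Finset.card_erase_of_mem hu3, Finset.card_erase_of_mem hu2,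
      Finset.card_erase_of_mem hu1]; omega
  obtain ⟨u4, hu4⟩ := Finset.card_pos.mp hc3
  -- unpack memberships
  obtain ⟨h43, h42, h41, hu4N⟩ :
      u4 ≠ u3 ∧ u4 ≠ u2 ∧ u4 ≠ u1 ∧ u4 ∈ N := by
    simp only [Finset.mem_erase] at hu4
    tauto
  obtain ⟨h32, h31, hu3N⟩ : u3 ≠ u2 ∧ u3 ≠ u1 ∧ u3 ∈ N := by
    simp only [Finset.mem_erase] at hu3
    tauto
  obtain ⟨h21, hu2N⟩ : u2 ≠ u1 ∧ u2 ∈ N := by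
    simp only [Finset.mem_erase] at hu2
    tauto
  have hva : G.Adj v u1 := (SimpleGraph.mem_neighborFinset _ _ _).mp hu1
  have hvb : G.Adj v u2 := (SimpleGraph.mem_neighborFinset _ _ _).mp hu2N
  have hvc : G.Adj v u3 := (SimpleGraph.mem_neighborFinset _ _ _).mp hu3N
  have hvd : G.Adj v u4 := (SimpleGraph.mem_neighborFinset _ _ _).mp hu4N
  obtain ⟨P, hPp, hPv⟩ := exists_path_avoiding hv hva hvb
  obtain ⟨Q, hQp, hQv⟩ := exists_path_avoiding hv hvc hvd
  by_cases hmeet : ∃ w ∈ Q.support, w ∈ P.support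
  · obtain ⟨x, Q1, Q2, happQ, hxP, hclQ1⟩ := split_first (· ∈ P.support) Q hmeet
    have hQps : (Q1.append Q2).IsPath := by rw [happQ]; exact hQp
    obtain ⟨hQ1p, hQ2p⟩ := isPath_append hQps
    have hx2 : x ∈ Q2.reverse.support := by
      rw [Walk.support_reverse, List.mem_reverse]
      exact Q2.start_mem_support
    obtain ⟨y, R1, R2, happR, hyP, hclR1⟩ :=
      split_first (· ∈ P.support) Q2.reverse ⟨x, hx2, hxP⟩
    have hRps : (R1.append R2).IsPath := by rw [happR]; exact hQ2p.reverse
    obtain ⟨hR1p, hR2p⟩ := isPath_append hRps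
    -- supports within Q
    have hQ1sub : ∀ w ∈ Q1.support, w ∈ Q.support := by
      intro w hw; rw [← happQ]; exact Walk.subset_support_append_left _ _ hw
    have hR1sub : ∀ w ∈ R1.support, w ∈ Q.support := by
      intro w hw
      have : w ∈ Q2.reverse.support := by
        rw [← happR]; exact Walk.subset_support_append_left _ _ hw
      rw [Walk.support_reverse, List.mem_reverse] at this
      rw [← happQ]
      exact Walk.subset_support_append_right _ _ this
    -- S and T
    have hSv : v ∉ Q1.reverse.support := by
      rw [Walk.support_reverse, List.mem_reverse]
      exact fun h => hQv (hQ1sub v h)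
    have hTv : v ∉ R1.reverse.support := by
      rw [Walk.support_reverse, List.mem_reverse]
      exact fun h => hQv (hR1sub v h)
    have hSP : ∀ w ∈ Q1.reverse.support, w ∈ P.support → w = x := by
      intro w hw hwP
      rw [Walk.support_reverse, List.mem_reverse] at hw
      exact hclQ1 w hw hwP
    have hTP : ∀ w ∈ R1.reverse.support, w ∈ P.support → w = y := by
      intro w hw hwP
      rw [Walk.support_reverse, List.mem_reverse] at hw
      exact hclR1 w hw hwP
    have hQnodup : Q.edges.Nodup := hQp.isTrail.edges_nodup
    have hQedges : Q.edges = Q1.edges ++ Q2.edges := by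
      rw [← happQ, Walk.edges_append]
    rw [hQedges, List.nodup_append] at hQnodup
    have hST : ∀ e ∈ Q1.reverse.edges, e ∉ R1.reverse.edges := by
      intro e he he'
      rw [Walk.edges_reverse, List.mem_reverse] at he he'
      have heQ2 : e ∈ Q2.edges := by
        have : e ∈ Q2.reverse.edges := by
          rw [← happR, Walk.edges_append]
          exact List.mem_append_left _ he'
        rwa [Walk.edges_reverse, List.mem_reverse] at this
      exact hQnodup.2.2 _ he _ heQ2 rfl
    exact core hva hvb hvc hvd h21.symm h31.symm h41.symm h32.symm h42.symm h43.symm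
      P hPp hPv hxP hyP
      Q1.reverse hQ1p.reverse hSv hSP
      R1.reverse hR1p.reverse hTv hTP hST
  · push_neg at hmeet
    refine twoCycles hva hvb hvc hvd h21.symm h43.symm h31.symm h41.symm h32.symm h42.symm
      P hPp hPv Q hQp hQv ?_
    intro e he he'
    induction e using Sym2.ind with
    | _ p q =>
      exact hmeet p (Walk.fst_mem_support_of_mem_edges _ he')
        (Walk.fst_mem_support_of_mem_edges _ he)

end TwoCyclesAux

theorem stmt15 {V : Type*} [Fintype V] (G : SimpleGraph V) [DecidableRel G.Adj]
    (v : V) (hv : ¬ IsCutVertex G v) (hd : 4 ≤ G.degree v) :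
    HasTwoEdgeDisjointCycles G := TwoCyclesAux.main G v hv hd
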